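/- Let 0 ≤ θ_L < θ_R and let f : ℝ → ℝ be continuously differentiable on [θ_L, θ_R]. Then the double integral below converges absolutely and ∫_{θ_L}^{θ_R} ∫₀¹ u^{−1} [ f(u θ_L + (1−u)θ) + f(u θ_R + (1−u)θ) − 2 f(θ) ] du dθ = 0. In other words, the uniform distribution on [θ_L, θ_R] is stationary for the single-site hidden-parameter model of the harmonic process coupled to left and right reservoirs with parameters θ_L and θ_R. -/

import Mathlib

open MeasureTheory Real Set intervalIntegral

/-- Interval integrability of `f` on subintervals of `[θL, θR]`. -/
lemma aux_interval_integrable {θL θR : ℝ} {f : ℝ → ℝ} (hfc : ContinuousOn f (Icc θL θR))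
    {a b : ℝ} (ha : a ∈ Icc θL θR) (hb : b ∈ Icc θL θR) :
    IntervalIntegrable f volume a b := by
  apply ContinuousOn.intervalIntegrable
  apply hfc.mono
  rw [uIcc_eq_union]
  exact union_subset (Icc_subset_Icc ha.1 hb.2) (Icc_subset_Icc hb.1 ha.2)

/-- The boundary part `H(u)` of the inner integral. -/
noncomputable def auxH (θL θR : ℝ) (f : ℝ → ℝ) (u : ℝ) : ℝ :=
  (∫ x in (θR - u*(θR-θL))..θR, f x) + ∫ x in θL..(θL + u*(θR-θL)), f x

/-- The inner integral `G(u)` over `θ`, as a function of `u`. -/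
noncomputable def auxG (θL θR : ℝ) (f : ℝ → ℝ) (u : ℝ) : ℝ :=
  (u*(1-u))⁻¹ * (2*u*(∫ x in θL..θR, f x) - auxH θL θR f u)

section Aux

variable {θL θR : ℝ} {f : ℝ → ℝ}

lemma aux_memR (hc : θL ≤ θR) {u : ℝ} (hu : u ∈ Icc (0:ℝ) 1) :
    θR - u*(θR-θL) ∈ Icc θL θR := by
  obtain ⟨h1, h2⟩ := hu; constructor <;> nlinarith

lemma aux_memL (hc : θL ≤ θR) {u : ℝ} (hu : u ∈ Icc (0:ℝ) 1) :
    θL + u*(θR-θL) ∈ Icc θL θR := by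
  obtain ⟨h1, h2⟩ := hu; constructor <;> nlinarith

lemma auxH_sym (hLR : θL ≤ θR) (hfc : ContinuousOn f (Icc θL θR)) {u : ℝ}
    (hu : u ∈ Icc (0:ℝ) 1) :
    auxH θL θR f u + auxH θL θR f (1-u) = 2 * ∫ x in θL..θR, f x := by
  have e1 : θL + (1-u)*(θR-θL) = θR - u*(θR-θL) := by ring
  have e2 : θR - (1-u)*(θR-θL) = θL + u*(θR-θL) := by ring
  have hL : θL ∈ Icc θL θR := ⟨le_rfl, hLR⟩
  have hR : θR ∈ Icc θL θR := ⟨hLR, le_rfl⟩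
  have a1 := integral_add_adjacent_intervals
    (aux_interval_integrable hfc hL (aux_memR hLR hu))
    (aux_interval_integrable hfc (aux_memR hLR hu) hR)
  have a2 := integral_add_adjacent_intervals
    (aux_interval_integrable hfc hL (aux_memL hLR hu))
    (aux_interval_integrable hfc (aux_memL hLR hu) hR)
  simp only [auxH, e1, e2]
  linarith

lemma auxG_sym (hLR : θL ≤ θR) (hfc : ContinuousOn f (Icc θL θR)) {u : ℝ}
    (hu : u ∈ Icc (0:ℝ) 1) :
    auxG θL θR f (1-u) = - auxG θL θR f u := by
  have h := auxH_sym hLR hfc hu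
  simp only [auxG]
  have e : auxH θL θR f (1-u) = 2 * (∫ x in θL..θR, f x) - auxH θL θR f u := by linarith
  rw [e]
  ring

/-- For fixed `u ∈ (0,1)`, the inner integral over `θ` equals `auxG θL θR f u`. -/
lemma aux_inner (hLR : θL < θR) (hfc : ContinuousOn f (Icc θL θR)) {u : ℝ}
    (hu : u ∈ Ioo (0:ℝ) 1) :
    (∫ θ in Icc θL θR, u⁻¹ * (f (u * θL + (1 - u) * θ) + f (u * θR + (1 - u) * θ) - 2 * f θ))
      = auxG θL θR f u := by
  obtain ⟨hu0, hu1⟩ := hu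
  have h1u : (0:ℝ) < 1 - u := by linarith
  have hL : θL ∈ Icc θL θR := ⟨le_rfl, hLR.le⟩
  have hR : θR ∈ Icc θL θR := ⟨hLR.le, le_rfl⟩
  have hcomp : ∀ c ∈ Icc θL θR, ContinuousOn (fun θ => f (u * c + (1 - u) * θ)) (Icc θL θR) := by
    intro c hc
    apply hfc.comp (by fun_prop)
    intro θ hθ
    simp only [mem_Icc]
    constructor <;>
      nlinarith [hc.1, hc.2, hθ.1, hθ.2, mul_nonneg hu0.le (sub_nonneg.2 hc.1),
        mul_nonneg hu0.le (sub_nonneg.2 hc.2), mul_nonneg h1u.le (sub_nonneg.2 hθ.1),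
        mul_nonneg h1u.le (sub_nonneg.2 hθ.2)]
  have i1 : IntervalIntegrable (fun θ => f (u * θL + (1 - u) * θ)) volume θL θR :=
    ContinuousOn.intervalIntegrable (by rw [uIcc_of_le hLR.le]; exact hcomp θL hL)
  have i2 : IntervalIntegrable (fun θ => f (u * θR + (1 - u) * θ)) volume θL θR :=
    ContinuousOn.intervalIntegrable (by rw [uIcc_of_le hLR.le]; exact hcomp θR hR)
  have i3 : IntervalIntegrable f volume θL θR :=
    ContinuousOn.intervalIntegrable (by rw [uIcc_of_le hLR.le]; exact hfc)
  rw [MeasureTheory.integral_Icc_eq_integral_Ioc, ← intervalIntegral.integral_of_le hLR.le]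
  rw [intervalIntegral.integral_const_mul,
    intervalIntegral.integral_sub (i1.add i2) (i3.const_mul 2),
    intervalIntegral.integral_add i1 i2, intervalIntegral.integral_const_mul]
  have c1 : (∫ θ in θL..θR, f (u * θL + (1 - u) * θ))
      = (1-u)⁻¹ * ∫ x in θL..(θR - u*(θR-θL)), f x := by
    have e : ∀ θ : ℝ, u * θL + (1 - u) * θ = (1-u) * θ + u * θL := fun θ => by ring
    simp_rw [e]
    rw [intervalIntegral.integral_comp_mul_add f (ne_of_gt h1u) (u*θL)]
    have e1 : (1-u) * θL + u * θL = θL := by ring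
    have e2 : (1-u) * θR + u * θL = θR - u*(θR-θL) := by ring
    rw [e1, e2, smul_eq_mul]
  have c2 : (∫ θ in θL..θR, f (u * θR + (1 - u) * θ))
      = (1-u)⁻¹ * ∫ x in (θL + u*(θR-θL))..θR, f x := by
    have e : ∀ θ : ℝ, u * θR + (1 - u) * θ = (1-u) * θ + u * θR := fun θ => by ring
    simp_rw [e]
    rw [intervalIntegral.integral_comp_mul_add f (ne_of_gt h1u) (u*θR)]
    have e1 : (1-u) * θL + u * θR = θL + u*(θR-θL) := by ring
    have e2 : (1-u) * θR + u * θR = θR := by ring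
    rw [e1, e2, smul_eq_mul]
  have hmR : θR - u*(θR-θL) ∈ Icc θL θR := aux_memR hLR.le ⟨hu0.le, hu1.le⟩
  have hmL : θL + u*(θR-θL) ∈ Icc θL θR := aux_memL hLR.le ⟨hu0.le, hu1.le⟩
  have a1 := integral_add_adjacent_intervals
    (aux_interval_integrable hfc hL hmR) (aux_interval_integrable hfc hmR hR)
  have a2 := integral_add_adjacent_intervals
    (aux_interval_integrable hfc hL hmL) (aux_interval_integrable hfc hmL hR)
  rw [c1, c2]
  have hA : (∫ x in θL..(θR - u*(θR-θL)), f x)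
      = (∫ x in θL..θR, f x) - ∫ x in (θR - u*(θR-θL))..θR, f x := by linarith
  have hB : (∫ x in (θL + u*(θR-θL))..θR, f x)
      = (∫ x in θL..θR, f x) - ∫ x in θL..(θL + u*(θR-θL)), f x := by linarith
  rw [hA, hB]
  simp only [auxG, auxH]
  field_simp
  ring

end Aux

/-- The uniform distribution on `[θ_L, θ_R]` is stationary for the single-site
hidden-parameter model of the harmonic process coupled to left and right reservoirs with
parameters `θ_L` and `θ_R`. -/
theorem uniform_stationary_single_site (θL θR : ℝ) (hL : 0 ≤ θL) (hLR : θL < θR)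
    (f : ℝ → ℝ) (hf : ContDiffOn ℝ 1 f (Set.Icc θL θR)) :
    IntegrableOn (fun q : ℝ × ℝ =>
      q.2⁻¹ * (f (q.2 * θL + (1 - q.2) * q.1) + f (q.2 * θR + (1 - q.2) * q.1) - 2 * f q.1))
      (Set.Icc θL θR ×ˢ Set.Ioo 0 1) volume ∧
    (∫ θ in Set.Icc θL θR, ∫ u in Set.Ioo (0:ℝ) 1,
      u⁻¹ * (f (u * θL + (1 - u) * θ) + f (u * θR + (1 - u) * θ) - 2 * f θ)) = 0 := by
  have hfc : ContinuousOn f (Icc θL θR) := hf.continuousOn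
  -- a Lipschitz constant for f on the interval
  obtain ⟨M, hM⟩ : ∃ M : NNReal, LipschitzOnWith M f (Icc θL θR) := by
    have hdiff : DifferentiableOn ℝ f (Icc θL θR) := hf.differentiableOn one_ne_zero
    have hdc : ContinuousOn (derivWithin f (Icc θL θR)) (Icc θL θR) :=
      hf.continuousOn_derivWithin (uniqueDiffOn_Icc hLR) le_rfl
    obtain ⟨C, hC⟩ := isCompact_Icc.exists_bound_of_continuousOn hdc
    refine ⟨‖C‖₊, (convex_Icc θL θR).lipschitzOnWith_of_nnnorm_derivWithin_le hdiff ?_⟩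
    intro x hx
    have := (hC x hx).trans (le_abs_self C)
    rwa [← Real.norm_eq_abs, ← coe_nnnorm, ← coe_nnnorm, NNReal.coe_le_coe] at this
  set s : Set (ℝ × ℝ) := Set.Icc θL θR ×ˢ Set.Ioo 0 1 with hs
  have hmeas : MeasurableSet s := measurableSet_Icc.prod measurableSet_Ioo
  have hmem : ∀ c ∈ Icc θL θR, ∀ q : ℝ × ℝ, q ∈ s → q.2 * c + (1 - q.2) * q.1 ∈ Icc θL θR := by
    rintro c hc ⟨θ, u⟩ ⟨hθ, hu⟩
    have hu0 := hu.1.le; have hu1 := hu.2.le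
    have h1u : (0:ℝ) ≤ 1 - u := by linarith
    simp only [mem_Icc]
    constructor <;>
      nlinarith [hc.1, hc.2, hθ.1, hθ.2, mul_nonneg hu0 (sub_nonneg.2 hc.1),
        mul_nonneg hu0 (sub_nonneg.2 hc.2), mul_nonneg h1u (sub_nonneg.2 hθ.1),
        mul_nonneg h1u (sub_nonneg.2 hθ.2)]
  have hFc : ContinuousOn (fun q : ℝ × ℝ =>
      q.2⁻¹ * (f (q.2 * θL + (1 - q.2) * q.1) + f (q.2 * θR + (1 - q.2) * q.1) - 2 * f q.1)) s := by
    apply ContinuousOn.mul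
    · exact ContinuousOn.inv₀ continuous_snd.continuousOn fun q hq => ne_of_gt hq.2.1
    · apply ContinuousOn.sub
      · apply ContinuousOn.add
        · exact hfc.comp (by fun_prop) (hmem θL ⟨le_rfl, hLR.le⟩)
        · exact hfc.comp (by fun_prop) (hmem θR ⟨hLR.le, le_rfl⟩)
      · exact (continuous_const.continuousOn).mul
          (hfc.comp continuous_fst.continuousOn fun q hq => hq.1)
  have hint : IntegrableOn (fun q : ℝ × ℝ =>
      q.2⁻¹ * (f (q.2 * θL + (1 - q.2) * q.1) + f (q.2 * θR + (1 - q.2) * q.1) - 2 * f q.1))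
      s volume := by
    refine ⟨hFc.aestronglyMeasurable hmeas, ?_⟩
    apply MeasureTheory.HasFiniteIntegral.restrict_of_bounded (C := 2 * M * (θR - θL))
    · calc volume s ≤ volume (Set.Icc θL θR ×ˢ Set.Icc (0:ℝ) 1) :=
          measure_mono (prod_mono subset_rfl Ioo_subset_Icc_self)
        _ < ⊤ := (isCompact_Icc.prod isCompact_Icc).measure_lt_top
    · rw [ae_restrict_iff' hmeas]
      apply Filter.Eventually.of_forall
      rintro ⟨θ, u⟩ hq
      obtain ⟨hθ, hu⟩ := hq
      have hu0 : (0:ℝ) < u := hu.1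
      have hu1 : u < 1 := hu.2
      have hm1 := hmem θL ⟨le_rfl, hLR.le⟩ (θ, u) ⟨hθ, hu⟩
      have hm2 := hmem θR ⟨hLR.le, le_rfl⟩ (θ, u) ⟨hθ, hu⟩
      have key : ∀ c ∈ Icc θL θR, u * c + (1 - u) * θ ∈ Icc θL θR →
          |f (u * c + (1 - u) * θ) - f θ| ≤ M * (u * (θR - θL)) := by
        intro c hc hmem'
        have h := hM.dist_le_mul _ hmem' _ hθ
        rw [Real.dist_eq, Real.dist_eq] at h
        refine h.trans ?_
        apply mul_le_mul_of_nonneg_left _ M.coe_nonneg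
        rw [abs_le]
        constructor <;> nlinarith [hc.1, hc.2, hθ.1, hθ.2]
      simp only [Real.norm_eq_abs, abs_mul, abs_inv, abs_of_pos hu0]
      have hsum : |f (u * θL + (1 - u) * θ) + f (u * θR + (1 - u) * θ) - 2 * f θ|
          ≤ 2 * (M * (u * (θR - θL))) := by
        have t1 := key θL ⟨le_rfl, hLR.le⟩ hm1
        have t2 := key θR ⟨hLR.le, le_rfl⟩ hm2
        calc |f (u * θL + (1 - u) * θ) + f (u * θR + (1 - u) * θ) - 2 * f θ|
            = |(f (u * θL + (1 - u) * θ) - f θ) + (f (u * θR + (1 - u) * θ) - f θ)| := by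
              ring_nf
          _ ≤ |f (u * θL + (1 - u) * θ) - f θ| + |f (u * θR + (1 - u) * θ) - f θ| := abs_add_le _ _
          _ ≤ 2 * (M * (u * (θR - θL))) := by linarith
      calc u⁻¹ * |f (u * θL + (1 - u) * θ) + f (u * θR + (1 - u) * θ) - 2 * f θ|
          ≤ u⁻¹ * (2 * (M * (u * (θR - θL)))) := by
            apply mul_le_mul_of_nonneg_left hsum (inv_nonneg.2 hu0.le)
        _ = 2 * M * (θR - θL) := by field_simp
  refine ⟨hint, ?_⟩
  -- Fubini: swap the order of integration
  have hprod : (volume.restrict (Icc θL θR)).prod (volume.restrict (Ioo (0:ℝ) 1))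
      = (volume : Measure (ℝ × ℝ)).restrict s := by
    rw [hs, Measure.prod_restrict, ← MeasureTheory.Measure.volume_eq_prod]
  have hFint : Integrable (Function.uncurry fun θ u : ℝ =>
      u⁻¹ * (f (u * θL + (1 - u) * θ) + f (u * θR + (1 - u) * θ) - 2 * f θ))
      ((volume.restrict (Icc θL θR)).prod (volume.restrict (Ioo (0:ℝ) 1))) := by
    rw [hprod]; exact hint
  have hswap := MeasureTheory.integral_integral_swap hFint
  rw [hswap]
  -- compute the inner integrals
  rw [MeasureTheory.setIntegral_congr_fun measurableSet_Ioo
    (g := auxG θL θR f) (fun u hu => aux_inner hLR hfc hu)]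
  rw [← MeasureTheory.integral_Ioc_eq_integral_Ioo,
    ← intervalIntegral.integral_of_le (zero_le_one (α := ℝ))]
  -- antisymmetry under u ↦ 1 - u
  have h1 : (∫ u in (0:ℝ)..1, auxG θL θR f (1 - u)) = ∫ u in (0:ℝ)..1, auxG θL θR f u := by
    simpa using intervalIntegral.integral_comp_sub_left (auxG θL θR f) 1
  have h2 : (∫ u in (0:ℝ)..1, auxG θL θR f (1 - u)) = ∫ u in (0:ℝ)..1, - auxG θL θR f u := by
    apply intervalIntegral.integral_congr
    intro x hx
    rw [uIcc_of_le (zero_le_one (α := ℝ))] at hx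
    exact auxG_sym hLR.le hfc hx
  rw [intervalIntegral.integral_neg] at h2
  linarith
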